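/- Let K_{2k}(z) = z^{2k} + c_{2k−1} z^{2k−1} + … + c_1 z + 1 be the Geronimo–Case polynomial and let u^{(2k)}_l denote the coefficient of z^l in L*_{2k}. For each j ≤ k, the coefficients satisfy c_j − c_{j−2} = u^{(2k)}_{2k−j} − u^{(2k)}_{j−2} (with c_l = 0 for l < 0 and c_0 = c_{2k} = 1). -/

import Mathlib

open Polynomial Finset

/-- Geronimo–Case recursion: `(GC a b m).1 = L*_m`, `(GC a b m).2 = K_m`. -/
noncomputable def GC (a b : ℕ → ℝ) : ℕ → Polynomial ℝ × Polynomial ℝ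
  | 0 => (1, 1)
  | m + 1 =>
      let p := GC a b m
      if m % 2 = 0 then
        (Polynomial.X * p.1 - Polynomial.C (b (m / 2 + 1)) * p.2, p.2)
      else
        (Polynomial.X * p.1 - Polynomial.C ((a (m / 2 + 1)) ^ 2 - 1) * p.2,
         Polynomial.X * p.1 + p.2)

lemma reflect_reflect' {R : Type*} [Semiring R] (N : ℕ) (f : R[X]) :
    reflect N (reflect N f) = f := by
  ext i
  rw [coeff_reflect, coeff_reflect, revAt_invol]

lemma reflect_sub' (f g : ℝ[X]) (N : ℕ) :
    reflect N (f - g) = reflect N f - reflect N g := by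
  ext i
  simp [coeff_reflect]

lemma natDegree_reflect_le {f : ℝ[X]} {N : ℕ} (h : f.natDegree ≤ N) :
    (reflect N f).natDegree ≤ N := by
  refine natDegree_le_iff_coeff_eq_zero.mpr fun i hi => ?_
  rw [coeff_reflect, revAt_eq_self_of_lt hi]
  exact coeff_eq_zero_of_natDegree_lt (lt_of_le_of_lt h hi)

lemma GC_deg (a b : ℕ → ℝ) (m : ℕ) :
    (GC a b m).1.natDegree ≤ m ∧ (GC a b m).2.natDegree ≤ m := by
  induction m with
  | zero => simp [GC]
  | succ m ih =>
    obtain ⟨h1, h2⟩ := ih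
    rw [GC]
    have hx1 : (X * (GC a b m).1).natDegree ≤ m + 1 :=
      natDegree_mul_le.trans (by simp; omega)
    have hc : ∀ c : ℝ, (C c * (GC a b m).2).natDegree ≤ m + 1 :=
      fun c => (natDegree_C_mul_le _ _).trans (by omega)
    split_ifs <;> constructor <;> simp only
    · exact (natDegree_sub_le _ _).trans (max_le hx1 (hc _))
    · omega
    · exact (natDegree_sub_le _ _).trans (max_le hx1 (hc _))
    · exact (natDegree_add_le _ _).trans (max_le hx1 (by omega))

lemma reflect_shift {f : ℝ[X]} {N : ℕ} (h : f.natDegree ≤ N) :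
    reflect (2 + N) f = X ^ 2 * reflect N f := by
  have := reflect_mul (1 : ℝ[X]) f (F := 2) (G := N) (by simp) h
  simpa [reflect_one] using this

lemma gc_key (a b : ℕ → ℝ) (k : ℕ) :
    (1 - X ^ 2) * (GC a b (2 * k)).2 =
      reflect (2 * k) (GC a b (2 * k)).1 - X ^ 2 * (GC a b (2 * k)).1 := by
  induction k with
  | zero => simp [GC, reflect_one]
  | succ k ih =>
    have hp := (GC_deg a b (2 * k)).1
    have hq := (GC_deg a b (2 * k)).2
    set p := (GC a b (2 * k)).1 with hpdef
    set q := (GC a b (2 * k)).2 with hqdef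
    have hd2 : ((1 : ℝ[X]) - X ^ 2).natDegree ≤ 2 :=
      (natDegree_sub_le _ _).trans (by simp)
    have hr2 : reflect 2 ((1 : ℝ[X]) - X ^ 2) = X ^ 2 - 1 := by
      rw [reflect_sub', reflect_one, reflect_monomial]
      norm_num [revAt_le]
    -- palindromicity of q
    have hpal : reflect (2 * k) q = q := by
      have hX2 : ((X : ℝ[X]) ^ 2 - 1) ≠ 0 := by
        intro h
        have := congrArg (fun f => Polynomial.coeff f 2) h
        simp [coeff_one] at this
      apply mul_left_cancel₀ hX2
      have h1 : reflect (2 + 2 * k) ((1 - X ^ 2) * q)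
          = (X ^ 2 - 1) * reflect (2 * k) q := by
        rw [reflect_mul _ _ hd2 hq, hr2]
      have e1 : reflect (2 + 2 * k) (reflect (2 * k) p) = X ^ 2 * p := by
        rw [reflect_shift (natDegree_reflect_le hp), reflect_reflect']
      have e2 : reflect (2 + 2 * k) (X ^ 2 * p) = reflect (2 * k) p := by
        rw [reflect_mul _ _ (by simp) hp, reflect_monomial, revAt_le (le_refl 2)]
        simp
      have := congrArg (reflect (2 + 2 * k)) ih
      rw [h1, reflect_sub', e1, e2] at this
      rw [this]
      rw [show ((X:ℝ[X]) ^ 2) * p - reflect (2 * k) p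
          = -((reflect (2 * k) p) - X ^ 2 * p) by ring, ← ih]
      ring
    -- unfold two steps of the recursion
    have h2k1 : GC a b (2 * k + 1) = (X * p - C (b (k + 1)) * q, q) := by
      rw [GC]
      simp [Nat.mul_mod_right, Nat.mul_div_cancel_left, ← hpdef, ← hqdef]
    have hstep : GC a b (2 * (k + 1)) =
        (X * (X * p - C (b (k + 1)) * q) - C ((a (k + 1)) ^ 2 - 1) * q,
         X * (X * p - C (b (k + 1)) * q) + q) := by
      have h' : 2 * (k + 1) = (2 * k + 1) + 1 := by ring
      rw [h', GC, h2k1]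
      have hmod : (2 * k + 1) % 2 = 1 := by omega
      have hdiv : (2 * k + 1) / 2 = k := by omega
      simp [hmod, hdiv]
    rw [hstep]
    simp only
    have h2k2 : 2 * (k + 1) = 2 + 2 * k := by ring
    have rA : reflect (2 + 2 * k) (X * (X * p)) = reflect (2 * k) p := by
      rw [show (X : ℝ[X]) * (X * p) = X ^ 2 * p by ring,
        reflect_mul _ _ (by simp) hp, reflect_monomial, revAt_le (le_refl 2)]
      simp
    have rB : reflect (2 + 2 * k) (X * (C (b (k + 1)) * q))
        = C (b (k + 1)) * X * q := by
      rw [show (X : ℝ[X]) * (C (b (k + 1)) * q) = (C (b (k + 1)) * X ^ 1) * q by ring,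
        reflect_mul _ _ ((natDegree_C_mul_le _ _).trans (by simp)) hq, hpal,
        reflect_C_mul_X_pow, revAt_le (by norm_num)]
      norm_num
    have rC : reflect (2 + 2 * k) (C ((a (k + 1)) ^ 2 - 1) * q)
        = C ((a (k + 1)) ^ 2 - 1) * (X ^ 2 * q) := by
      rw [reflect_C_mul, reflect_shift hq, hpal]
    rw [h2k2, show X * (X * p - C (b (k + 1)) * q) - C ((a (k + 1)) ^ 2 - 1) * q
        = X * (X * p) - X * (C (b (k + 1)) * q) - C ((a (k + 1)) ^ 2 - 1) * q
        by ring,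
      reflect_sub', reflect_sub', rA, rB, rC]
    have hrp : reflect (2 * k) p = (1 - X ^ 2) * q + X ^ 2 * p := by
      rw [ih]; ring
    rw [hrp]; ring

theorem geronimo_case_coeff_relation (a b : ℕ → ℝ) (ha : ∀ j, 0 < a j) (k : ℕ)
    (j : ℕ) (hj : j ≤ k) :
    ((GC a b (2 * k)).2).coeff j - (if 2 ≤ j then ((GC a b (2 * k)).2).coeff (j - 2) else 0) =
      ((GC a b (2 * k)).1).coeff (2 * k - j)
        - (if 2 ≤ j then ((GC a b (2 * k)).1).coeff (j - 2) else 0) := by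
  have h := gc_key a b k
  have key := congrArg (fun f => Polynomial.coeff f j) h
  simp only [sub_mul, one_mul, coeff_sub] at key
  have hXco : ∀ f : ℝ[X], ((X : ℝ[X]) ^ 2 * f).coeff j
      = if 2 ≤ j then f.coeff (j - 2) else 0 := fun f => by
    rw [mul_comm, coeff_mul_X_pow']
  rw [hXco, hXco, coeff_reflect, revAt_le (by omega : j ≤ 2 * k)] at key
  exact key
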